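/- Let r ∈ {1, 2, 3} and l ≥ r, and let a₁, …, a_r ∈ ℤˡ be vectors all of whose entries are 0 or 1. If the reductions of a₁, …, a_r modulo 2 are linearly independent over the field 𝔽₂ = ℤ/2ℤ, then a₁, …, a_r form part of a basis of ℤˡ, i.e., there exists a ℤ-basis of ℤˡ containing a₁, …, a_r. -/

import Mathlib

open Matrix

/-- A rectangular matrix over a field with linearly independent rows has an invertible
square submatrix obtained by selecting columns. -/
lemma exists_unit_submatrix {K : Type*} [Field K] {r l : ℕ}
    (B : Matrix (Fin r) (Fin l) K) (hB : LinearIndependent K (fun i => B i)) :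
    ∃ g : Fin r → Fin l, Function.Injective g ∧ IsUnit (B.submatrix id g) := by
  classical
  set cols : Fin l → (Fin r → K) := fun j i => B i j with hcols
  have hspan : Submodule.span K (Set.range cols) = ⊤ := by
    have hrank : B.rank = Fintype.card (Fin r) := hB.rank_matrix
    have h1 : B.rank = Module.finrank K (Submodule.span K (Set.range Bᵀ)) :=
      B.rank_eq_finrank_span_cols
    have hco : Set.range Bᵀ = Set.range cols := by
      ext v; constructor <;> rintro ⟨j, rfl⟩ <;> exact ⟨j, rfl⟩
    rw [hco] at h1
    apply Submodule.eq_top_of_finrank_eq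
    rw [← h1, hrank]
    simp [Module.finrank_pi]
  obtain ⟨s, hs_sub, hs_span, hs_ind⟩ := exists_linearIndependent K (Set.range cols)
  rw [hspan] at hs_span
  have hsfin : s.Finite := Set.Finite.subset (Set.finite_range cols) hs_sub
  haveI : Fintype s := hsfin.fintype
  have hcard : Fintype.card s = r := by
    have := finrank_span_set_eq_card hs_ind
    rw [hs_span] at this
    simp [Module.finrank_pi, Set.toFinset_card] at this
    rw [Set.ncard_eq_toFinset_card', Set.toFinset_card] at this
    omega
  let e : Fin r ≃ s := (Fintype.equivFinOfCardEq hcard).symm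
  choose pick hpick using fun v : s => hs_sub v.2
  refine ⟨fun i => pick (e i), ?_, ?_⟩
  · intro i i' h
    have : cols (pick (e i)) = cols (pick (e i')) := congrArg cols h
    rw [hpick, hpick] at this
    exact e.injective (Subtype.ext this)
  · rw [← linearIndependent_cols_iff_isUnit]
    have : (fun j => (B.submatrix id (fun i => pick (e i)))ᵀ j) =
        (fun v : s => (v : Fin r → K)) ∘ e := by
      funext j; ext i
      exact congrFun (hpick (e j)) i
    change LinearIndependent K (fun j => (B.submatrix id (fun i => pick (e i)))ᵀ j)
    rw [this]
    exact hs_ind.comp e e.injective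

lemma det1_unit (A : Matrix (Fin 1) (Fin 1) ℤ) (h : ∀ i j, A i j = 0 ∨ A i j = 1)
    (hodd : ¬ (2 ∣ A.det)) : IsUnit A.det := by
  rw [Int.isUnit_iff]
  rw [Matrix.det_fin_one] at *
  rcases h 0 0 with h0 | h0 <;> omega

lemma det2_unit (A : Matrix (Fin 2) (Fin 2) ℤ) (h : ∀ i j, A i j = 0 ∨ A i j = 1)
    (hodd : ¬ (2 ∣ A.det)) : IsUnit A.det := by
  rw [Int.isUnit_iff]
  rw [Matrix.det_fin_two] at *
  rcases h 0 0 with h00 | h00 <;> rcases h 0 1 with h01 | h01 <;>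
    rcases h 1 0 with h10 | h10 <;> rcases h 1 1 with h11 | h11 <;>
    rw [h00, h01, h10, h11] at hodd ⊢ <;> omega

set_option maxHeartbeats 2000000 in
lemma det3_unit (A : Matrix (Fin 3) (Fin 3) ℤ) (h : ∀ i j, A i j = 0 ∨ A i j = 1)
    (hodd : ¬ (2 ∣ A.det)) : IsUnit A.det := by
  rw [Int.isUnit_iff]
  rw [Matrix.det_fin_three] at *
  rcases h 0 0 with h00 | h00 <;> rcases h 0 1 with h01 | h01 <;>
    rcases h 0 2 with h02 | h02 <;>
    rcases h 1 0 with h10 | h10 <;> rcases h 1 1 with h11 | h11 <;>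
    rcases h 1 2 with h12 | h12 <;>
    rcases h 2 0 with h20 | h20 <;> rcases h 2 1 with h21 | h21 <;>
    rcases h 2 2 with h22 | h22 <;>
    rw [h00, h01, h02, h10, h11, h12, h20, h21, h22] at hodd ⊢ <;> omega

/-- For `r ∈ {1,2,3}` and `l ≥ r`: if `a₁,…,a_r ∈ ℤˡ` are `0/1`-vectors whose reductions
mod `2` are linearly independent over `𝔽₂`, then `a₁,…,a_r` form part of a `ℤ`-basis of `ℤˡ`. -/
theorem stmt_2 (r l : ℕ) (hr : r = 1 ∨ r = 2 ∨ r = 3) (hl : r ≤ l)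
    (a : Fin r → (Fin l → ℤ)) (h01 : ∀ i j, a i j = 0 ∨ a i j = 1)
    (hind : LinearIndependent (ZMod 2) (fun i : Fin r => fun j : Fin l => ((a i j : ZMod 2)))) :
    ∃ (b : Module.Basis (Fin l) ℤ (Fin l → ℤ)) (f : Fin r → Fin l),
      Function.Injective f ∧ ∀ i, b (f i) = a i := by
  classical
  -- Step 1: get columns g with invertible mod-2 submatrix
  set Bm : Matrix (Fin r) (Fin l) (ZMod 2) := Matrix.of (fun i j => ((a i j : ZMod 2))) with hBm
  obtain ⟨g, hg_inj, hg_unit⟩ := exists_unit_submatrix Bm hind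
  -- Step 2: the integer submatrix has unit determinant
  set A : Matrix (Fin r) (Fin r) ℤ := Matrix.of (fun i i' => a i (g i')) with hA
  have hmap : (Int.castRingHom (ZMod 2)).mapMatrix A = Bm.submatrix id g := by
    ext i i'; simp [hA, hBm]
  have hdet_ne : ((A.det : ℤ) : ZMod 2) ≠ 0 := by
    have hdu : IsUnit (Bm.submatrix id g).det := (Matrix.isUnit_iff_isUnit_det _).mp hg_unit
    rw [← hmap, ← RingHom.map_det] at hdu
    simpa using hdu.ne_zero
  have hodd : ¬ (2 ∣ A.det) := by
    intro hdvd
    apply hdet_ne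
    rw [show ((A.det : ℤ) : ZMod 2) = 0 ↔ (2 : ℤ) ∣ A.det from by
      rw [ZMod.intCast_zmod_eq_zero_iff_dvd]; norm_num]
    exact hdvd
  have hdetA : IsUnit A.det := by
    have hA01 : ∀ i j, A i j = 0 ∨ A i j = 1 := fun i j => h01 i (g j)
    rcases hr with rfl | rfl | rfl
    · exact det1_unit A hA01 hodd
    · exact det2_unit A hA01 hodd
    · exact det3_unit A hA01 hodd
  -- Step 3: build an equiv G : Fin r ⊕ Fin (l-r) ≃ Fin l extending g
  have hcompl : Fintype.card ((Set.range g)ᶜ : Set (Fin l)) = l - r := by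
    rw [Fintype.card_compl_set]
    rw [Set.card_range_of_injective hg_inj]
    simp
  let e1 : Fin r ≃ Set.range g := Equiv.ofInjective g hg_inj
  let e2 : Fin (l - r) ≃ ((Set.range g)ᶜ : Set (Fin l)) :=
    (Fintype.equivFinOfCardEq hcompl).symm
  let G : (Fin r ⊕ Fin (l - r)) ≃ Fin l :=
    (Equiv.sumCongr e1 e2).trans (Equiv.Set.sumCompl (Set.range g))
  have hGl : ∀ i, G (Sum.inl i) = g i := fun i => rfl
  -- Step 4: the big matrix
  set R : (Fin r ⊕ Fin (l - r)) → Fin l → ℤ :=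
    Sum.elim a (fun j => Pi.single (G (Sum.inr j)) 1) with hR
  set M : Matrix (Fin l) (Fin l) ℤ := Matrix.of (fun k => R (G.symm k)) with hM
  have hMrow : ∀ p, M (G p) = R p := by
    intro p
    show R (G.symm (G p)) = R p
    rw [G.symm_apply_apply]
  have hblock : M.submatrix G G =
      Matrix.fromBlocks A (Matrix.of fun i j' => a i (G (Sum.inr j'))) 0 1 := by
    ext p q
    rcases p with i | j <;> rcases q with i' | j'
    · simp [Matrix.submatrix, hMrow, hR, hA, hGl]
    · simp [Matrix.submatrix, hMrow, hR]
    · simp only [Matrix.submatrix_apply, hMrow, hR, Sum.elim_inr,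
        Matrix.fromBlocks_apply₂₁, Matrix.zero_apply]
      exact Pi.single_eq_of_ne (fun h => Sum.inl_ne_inr (G.injective h)) 1
    · simp only [Matrix.submatrix_apply, hMrow, hR, Sum.elim_inr,
        Matrix.fromBlocks_apply₂₂]
      by_cases h : j' = j
      · subst h; simp [Matrix.one_apply]
      · rw [Pi.single_eq_of_ne (fun hc => h (Sum.inr_injective (G.injective hc))) 1]
        simp [Matrix.one_apply, Ne.symm h]
  have hdetM : IsUnit M.det := by
    have : (M.submatrix G G).det = M.det := Matrix.det_submatrix_equiv_self G M
    rw [← this, hblock, Matrix.det_fromBlocks_zero₂₁]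
    simpa using hdetA
  -- Step 5: basis from rows of M
  have hdetMT : IsUnit Mᵀ.det := by rwa [Matrix.det_transpose]
  have hinv : Invertible Mᵀ := Mᵀ.invertibleOfIsUnitDet hdetMT
  let eqv : (Fin l → ℤ) ≃ₗ[ℤ] (Fin l → ℤ) := Mᵀ.toLinearEquiv' hinv
  let b : Module.Basis (Fin l) ℤ (Fin l → ℤ) := (Pi.basisFun ℤ (Fin l)).map eqv
  have hb : ∀ k, b k = M k := by
    intro k
    have : b k = eqv ((Pi.basisFun ℤ (Fin l)) k) := rfl
    rw [this]
    have heq : eqv ((Pi.basisFun ℤ (Fin l)) k) = Mᵀ.mulVec (Pi.single k 1) := by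
      simp [eqv, Matrix.toLinearEquiv', Matrix.mulVecLin]
    rw [heq]
    ext i
    simp [Matrix.mulVec_single]
  refine ⟨b, fun i => G (Sum.inl i), ?_, ?_⟩
  · intro i i' h
    exact Sum.inl_injective (G.injective h)
  · intro i
    rw [hb, hMrow]
    rfl
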